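/- arXiv:2402.15807 — 11 statements merged into one kernel-verified Lean document; each statement's English description precedes it below -/
import Mathlib

section
/- Let g be a Lie algebra over a field K of characteristic zero, t ∈ K with t ≠ 0 and t ≠ 1, and D a linear map g → g satisfying t·D⁅X,Y⁆ = ⁅D X, Y⁆ for all X,Y. Then D⁅X,⁅Y,Z⁆⁆ = 0 for all X,Y,Z ∈ g. -/
theorem stmt_4 {K L : Type*} [Field K] [CharZero K] [LieRing L] [LieAlgebra K L]
    (t : K) (ht0 : t ≠ 0) (ht1 : t ≠ 1) (D : L →ₗ[K] L)
    (hD : ∀ X Y : L, t • D ⁅X, Y⁆ = ⁅D X, Y⁆) :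
    ∀ X Y Z : L, D ⁅X, ⁅Y, Z⁆⁆ = 0 := by
  intro X Y Z
  have key : t • D ⁅X, ⁅Y, Z⁆⁆ = (t * t) • D ⁅X, ⁅Y, Z⁆⁆ := by
    calc t • D ⁅X, ⁅Y, Z⁆⁆ = ⁅D X, ⁅Y, Z⁆⁆ := hD X ⁅Y, Z⁆
    _ = ⁅⁅D X, Y⁆, Z⁆ + ⁅Y, ⁅D X, Z⁆⁆ := (leibniz_lie _ _ _)
    _ = ⁅t • D ⁅X, Y⁆, Z⁆ + ⁅Y, t • D ⁅X, Z⁆⁆ := by rw [hD, hD]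
    _ = t • ⁅D ⁅X, Y⁆, Z⁆ + t • ⁅Y, D ⁅X, Z⁆⁆ := by rw [smul_lie, lie_smul]
    _ = t • ⁅D ⁅X, Y⁆, Z⁆ - t • ⁅D ⁅X, Z⁆, Y⁆ := by
        rw [← lie_skew (D ⁅X, Z⁆) Y, smul_neg, sub_neg_eq_add]
    _ = t • (t • D ⁅⁅X, Y⁆, Z⁆) - t • (t • D ⁅⁅X, Z⁆, Y⁆) := by rw [hD, hD]
    _ = (t * t) • D (⁅⁅X, Y⁆, Z⁆ - ⁅⁅X, Z⁆, Y⁆) := by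
        rw [map_sub, smul_sub, smul_smul, smul_smul]
    _ = (t * t) • D ⁅X, ⁅Y, Z⁆⁆ := by
        rw [show ⁅⁅X, Y⁆, Z⁆ - ⁅⁅X, Z⁆, Y⁆ = ⁅X, ⁅Y, Z⁆⁆ by
          rw [leibniz_lie X Y Z, ← lie_skew ⁅X, Z⁆ Y]; abel]
  have hsub : (t - t * t) • D ⁅X, ⁅Y, Z⁆⁆ = 0 := by
    rw [sub_smul, key, sub_self]
  rcases smul_eq_zero.mp hsub with h | h
  · exfalso
    have : t * (1 - t) = 0 := by ring_nf; linear_combination h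
    rcases mul_eq_zero.mp this with h' | h'
    · exact ht0 h'
    · exact ht1 (by linear_combination -h')
  · exact h
end

section
/- Let g be a perfect Lie algebra over a field K of characteristic zero (i.e., ⁅g,g⁆ = g), and let t ∈ K with t ≠ 0, t ≠ 1. Then every (t,1,0)-derivation of g is the zero map. -/
theorem stmt_5 {K L : Type*} [Field K] [CharZero K] [LieRing L] [LieAlgebra K L]
    (hperfect : Submodule.span K {z : L | ∃ X Y : L, ⁅X, Y⁆ = z} = ⊤)
    (t : K) (ht0 : t ≠ 0) (ht1 : t ≠ 1) (D : L →ₗ[K] L)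
    (hD : ∀ X Y : L, t • D ⁅X, Y⁆ = ⁅D X, Y⁆) :
    D = 0 := by
  have key : ∀ X Y Z : L, ⁅D X, ⁅Y, Z⁆⁆ = 0 := by
    intro X Y Z
    have e1 : t • (t • D ⁅⁅X, Y⁆, Z⁆) = ⁅⁅D X, Y⁆, Z⁆ := by
      rw [hD, ← smul_lie, hD]
    have e2 : t • (t • D ⁅⁅X, Y⁆, Z⁆) = t • ⁅D X, ⁅Y, Z⁆⁆ + ⁅⁅D X, Z⁆, Y⁆ := by
      have hj : ⁅⁅X, Y⁆, Z⁆ = ⁅X, ⁅Y, Z⁆⁆ + ⁅⁅X, Z⁆, Y⁆ := by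
        rw [lie_lie]; abel_nf; rw [← lie_skew Y ⁅X, Z⁆]; abel
      have e2a : t • (t • D ⁅⁅X, Z⁆, Y⁆) = ⁅⁅D X, Z⁆, Y⁆ := by
        rw [hD, ← smul_lie, hD]
      rw [hj, map_add, smul_add, smul_add, e2a, hD X]
    have e3 : ⁅⁅D X, Y⁆, Z⁆ = ⁅D X, ⁅Y, Z⁆⁆ + ⁅⁅D X, Z⁆, Y⁆ := by
      rw [lie_lie]; rw [← lie_skew Y ⁅D X, Z⁆]; abel
    have : (t - 1) • ⁅D X, ⁅Y, Z⁆⁆ = 0 := by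
      have h := e1.symm.trans e2
      rw [e3] at h
      have h4 : ⁅D X, ⁅Y, Z⁆⁆ = t • ⁅D X, ⁅Y, Z⁆⁆ := add_right_cancel h
      rw [sub_smul, one_smul, ← h4, sub_self]
    rcases smul_eq_zero.mp this with h | h
    · exact absurd (sub_eq_zero.mp h) ht1
    · exact h
  have key2 : ∀ X W : L, ⁅D X, W⁆ = 0 := by
    intro X W
    have hW : W ∈ Submodule.span K {z : L | ∃ X Y : L, ⁅X, Y⁆ = z} := by
      rw [hperfect]; trivial
    induction hW using Submodule.span_induction with
    | mem w hw => obtain ⟨Y, Z, rfl⟩ := hw; exact key X Y Z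
    | zero => simp
    | add a b _ _ ha hb => rw [lie_add, ha, hb, add_zero]
    | smul c a _ ha => rw [lie_smul, ha, smul_zero]
  have key3 : ∀ z : L, D z = 0 := by
    intro z
    have hz : z ∈ Submodule.span K {z : L | ∃ X Y : L, ⁅X, Y⁆ = z} := by
      rw [hperfect]; trivial
    induction hz using Submodule.span_induction with
    | mem w hw =>
      obtain ⟨X, Y, rfl⟩ := hw
      have := hD X Y
      rw [key2] at this
      exact (smul_eq_zero.mp this).resolve_left ht0
    | zero => simp
    | add a b _ _ ha hb => rw [map_add, ha, hb, add_zero]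
    | smul c a _ ha => rw [map_smul, ha, smul_zero]
  ext z; exact key3 z
end

section
/- Let g be a Lie algebra over K (char 0), t ∈ K with t ≠ 0 and t ≠ 1, and D a (t,1,0)-derivation of g. Then D maps the derived subalgebra ⁅g,g⁆ into ⁅g,g⁆ ∩ Z(g), where Z(g) is the center of g. -/
theorem stmt_6 {K L : Type*} [Field K] [CharZero K] [LieRing L] [LieAlgebra K L]
    (t : K) (ht0 : t ≠ 0) (ht1 : t ≠ 1) (D : L →ₗ[K] L)
    (hD : ∀ X Y : L, t • D ⁅X, Y⁆ = ⁅D X, Y⁆) :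
    ∀ x ∈ Submodule.span K {z : L | ∃ X Y : L, ⁅X, Y⁆ = z},
      D x ∈ Submodule.span K {z : L | ∃ X Y : L, ⁅X, Y⁆ = z} ∧ ∀ Y : L, ⁅D x, Y⁆ = 0 := by
  have hsym : ∀ X Y : L, ⁅D X, Y⁆ = ⁅X, D Y⁆ := by
    intro X Y
    have h1 := hD X Y
    have h2 := hD Y X
    calc ⁅D X, Y⁆ = t • D ⁅X, Y⁆ := (hD X Y).symm
      _ = t • D (-⁅Y, X⁆) := by rw [lie_skew]
      _ = -(t • D ⁅Y, X⁆) := by rw [map_neg, smul_neg]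
      _ = -⁅D Y, X⁆ := by rw [hD]
      _ = ⁅X, D Y⁆ := lie_skew _ _
  have key : ∀ X Y Z : L, D ⁅X, ⁅Y, Z⁆⁆ = 0 := by
    intro X Y Z
    have e1 : t • D ⁅X, ⁅Y, Z⁆⁆ = ⁅D X, ⁅Y, Z⁆⁆ := hD _ _
    have e2 : ⁅D X, ⁅Y, Z⁆⁆ = ⁅⁅D X, Y⁆, Z⁆ + ⁅Y, ⁅D X, Z⁆⁆ := leibniz_lie _ _ _
    have e3 : ⁅⁅D X, Y⁆, Z⁆ = t • (t • D ⁅⁅X, Y⁆, Z⁆) := by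
      rw [← hD X Y, smul_lie, hD]
    have e4 : ⁅Y, ⁅D X, Z⁆⁆ = t • (t • D ⁅Y, ⁅X, Z⁆⁆) := by
      rw [← hD X Z, lie_smul, ← hsym, hD]
    have e5 : t • D ⁅X, ⁅Y, Z⁆⁆ = (t * t) • D ⁅X, ⁅Y, Z⁆⁆ := by
      rw [mul_smul]
      calc t • D ⁅X, ⁅Y, Z⁆⁆ = ⁅D X, ⁅Y, Z⁆⁆ := e1
        _ = ⁅⁅D X, Y⁆, Z⁆ + ⁅Y, ⁅D X, Z⁆⁆ := e2
        _ = t • t • D ⁅⁅X, Y⁆, Z⁆ + t • t • D ⁅Y, ⁅X, Z⁆⁆ := by rw [e3, e4]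
        _ = t • t • D (⁅⁅X, Y⁆, Z⁆ + ⁅Y, ⁅X, Z⁆⁆) := by
              rw [map_add, smul_add, smul_add]
        _ = t • t • D ⁅X, ⁅Y, Z⁆⁆ := by rw [← leibniz_lie]
    have e6 : (t - t * t) • D ⁅X, ⁅Y, Z⁆⁆ = 0 := by
      rw [sub_smul, e5, sub_self]
    have htt : t - t * t ≠ 0 := by
      intro h
      have h2 : t * (1 - t) = 0 := by linear_combination h
      rcases mul_eq_zero.mp h2 with h' | h'
      · exact ht0 h'
      · exact ht1 (sub_eq_zero.mp h').symm
    exact (smul_eq_zero.mp e6).resolve_left htt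
  intro x hx
  induction hx using Submodule.span_induction with
  | mem z hz =>
    obtain ⟨X, Y, rfl⟩ := hz
    constructor
    · have hDz : D ⁅X, Y⁆ = t⁻¹ • ⁅D X, Y⁆ := by
        rw [← hD X Y, inv_smul_smul₀ ht0]
      rw [hDz]
      exact Submodule.smul_mem _ _ (Submodule.subset_span ⟨D X, Y, rfl⟩)
    · intro W
      rw [← hD ⁅X, Y⁆ W]
      have : D ⁅⁅X, Y⁆, W⁆ = 0 := by
        have := key W X Y
        rw [← lie_skew, map_neg] at *
        rw [key]
        simp
      rw [this, smul_zero]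
  | zero => simp
  | add a b ha hb iha ihb =>
    refine ⟨?_, ?_⟩
    · rw [map_add]; exact Submodule.add_mem _ iha.1 ihb.1
    · intro W; rw [map_add, add_lie, iha.2, ihb.2, add_zero]
  | smul c a ha iha =>
    refine ⟨?_, ?_⟩
    · rw [map_smul]; exact Submodule.smul_mem _ _ iha.1
    · intro W; rw [map_smul, smul_lie, iha.2, smul_zero]
end

section
/- Let g be a Lie algebra over K (char 0) with g ≠ ⁅g,g⁆, and let t, s ∈ K with t ≠ 0, t ≠ 1, s ≠ 0, s ≠ 1. Then the vector space D(t,1,0)(g) of (t,1,0)-derivations of g is linearly isomorphic to the vector space D(s,1,0)(g) of (s,1,0)-derivations of g. -/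
section Defs
variable (K L : Type*) [Field K] [LieRing L] [LieAlgebra K L]

/-- The space of (t,1,0)-derivations of a Lie algebra. -/
def lieDerivSpace (t : K) : Submodule K (L →ₗ[K] L) where
  carrier := {D | ∀ X Y : L, t • D ⁅X, Y⁆ = ⁅D X, Y⁆}
  add_mem' := by
    intro a b ha hb X Y
    simp only [LinearMap.add_apply, smul_add, ha X Y, hb X Y, add_lie]
  zero_mem' := by intro X Y; simp
  smul_mem' := by
    intro c a ha X Y
    simp only [LinearMap.smul_apply, smul_comm t c, ha X Y, smul_lie]

/-- The center of a Lie algebra, as a submodule. -/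
def lieCenterSub : Submodule K L where
  carrier := {X | ∀ Y : L, ⁅X, Y⁆ = 0}
  add_mem' := by intro a b ha hb Y; simp [add_lie, ha Y, hb Y]
  zero_mem' := by intro Y; simp
  smul_mem' := by intro c a ha Y; simp [smul_lie, ha Y]

/-- The derived subalgebra, as a submodule. -/
def lieDerivedSub : Submodule K L :=
  Submodule.span K {z | ∃ X Y : L, ⁅X, Y⁆ = z}

/-- The space Ω(g) of linear maps with image in the center and killing the derived subalgebra. -/
def lieOmega : Submodule K (L →ₗ[K] L) where
  carrier := {T | (∀ x y : L, ⁅T x, y⁆ = 0) ∧ ∀ x ∈ lieDerivedSub K L, T x = 0}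
  add_mem' := by
    intro a b ha hb
    refine ⟨fun x y => ?_, fun x hx => ?_⟩
    · simp [add_lie, ha.1 x y, hb.1 x y]
    · simp [ha.2 x hx, hb.2 x hx]
  zero_mem' := ⟨by simp, by simp⟩
  smul_mem' := by
    intro c a ha
    refine ⟨fun x y => ?_, fun x hx => ?_⟩
    · simp [smul_lie, ha.1 x y]
    · simp [ha.2 x hx]

end Defs


section Aux
variable {K L : Type*} [Field K] [LieRing L] [LieAlgebra K L]

lemma aux_right {t : K} {D : L →ₗ[K] L} (hD : D ∈ lieDerivSpace K L t) (X Y : L) :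
    ⁅D X, Y⁆ = t • D ⁅X, Y⁆ := (hD X Y).symm

lemma aux_left {t : K} {D : L →ₗ[K] L} (hD : D ∈ lieDerivSpace K L t) (X Y : L) :
    ⁅X, D Y⁆ = t • D ⁅X, Y⁆ := by
  rw [← lie_skew, aux_right hD, ← lie_skew X Y, map_neg, smul_neg]

lemma aux_kill {t : K} (ht0 : t ≠ 0) (ht1 : t ≠ 1) {D : L →ₗ[K] L}
    (hD : D ∈ lieDerivSpace K L t) (X Y Z : L) : D ⁅X, ⁅Y, Z⁆⁆ = 0 := by
  have h : t • D ⁅X, ⁅Y, Z⁆⁆ = (t * t) • D ⁅X, ⁅Y, Z⁆⁆ := by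
    calc t • D ⁅X, ⁅Y, Z⁆⁆ = ⁅D X, ⁅Y, Z⁆⁆ := (aux_right hD _ _).symm
    _ = ⁅⁅D X, Y⁆, Z⁆ + ⁅Y, ⁅D X, Z⁆⁆ := leibniz_lie _ _ _
    _ = (t * t) • (D ⁅⁅X, Y⁆, Z⁆ + D ⁅Y, ⁅X, Z⁆⁆) := by
        rw [aux_right hD X Y, aux_right hD X Z, smul_lie, lie_smul,
          aux_right hD, aux_left hD, smul_smul, smul_smul, smul_add]
    _ = (t * t) • D ⁅X, ⁅Y, Z⁆⁆ := by rw [← map_add, ← leibniz_lie]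
  have h2 : (t - t * t) • D ⁅X, ⁅Y, Z⁆⁆ = 0 := by
    rw [sub_smul, h, sub_self]
  have hne : t - t * t ≠ 0 := by
    intro hc
    apply ht1
    have : t * (1 - t) = 0 := by linear_combination hc
    rcases mul_eq_zero.mp this with h' | h'
    · exact absurd h' ht0
    · linear_combination -h'
  exact (smul_eq_zero.mp h2).resolve_left hne

lemma aux_central {t : K} (ht0 : t ≠ 0) (ht1 : t ≠ 1) {D : L →ₗ[K] L}
    (hD : D ∈ lieDerivSpace K L t) {z : L} (hz : z ∈ lieDerivedSub K L) (Y : L) :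
    ⁅D z, Y⁆ = 0 := by
  induction hz using Submodule.span_induction with
  | mem w hw =>
      obtain ⟨A, B, rfl⟩ := hw
      rw [aux_right hD]
      have : ⁅⁅A, B⁆, Y⁆ = ⁅A, ⁅B, Y⁆⁆ - ⁅B, ⁅A, Y⁆⁆ := lie_lie _ _ _
      rw [this, map_sub, aux_kill ht0 ht1 hD, aux_kill ht0 ht1 hD, sub_self, smul_zero]
  | zero => simp
  | add x y hx hy ihx ihy => rw [map_add, add_lie, ihx, ihy, add_zero]
  | smul c x hx ihx => rw [map_smul, smul_lie, ihx, smul_zero]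

lemma aux_bracket_mem (X Y : L) : ⁅X, Y⁆ ∈ lieDerivedSub K L :=
  Submodule.subset_span ⟨X, Y, rfl⟩

/-- The transported map lies in the new derivation space. -/
lemma aux_map_mem {t s : K} (ht0 : t ≠ 0) (ht1 : t ≠ 1) (hs0 : s ≠ 0)
    {D : L →ₗ[K] L} (hD : D ∈ lieDerivSpace K L t)
    (p : L →ₗ[K] L) (hp1 : ∀ x ∈ lieDerivedSub K L, p x = x)
    (hp2 : ∀ x, p x ∈ lieDerivedSub K L) :
    D + (t / s - 1) • (D ∘ₗ p) ∈ lieDerivSpace K L s := by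
  intro X Y
  have hXY : p ⁅X, Y⁆ = ⁅X, Y⁆ := hp1 _ (aux_bracket_mem X Y)
  have hc : ⁅D (p X), Y⁆ = 0 := aux_central ht0 ht1 hD (hp2 X) Y
  simp only [LinearMap.add_apply, LinearMap.smul_apply, LinearMap.comp_apply, hXY,
    add_lie, smul_lie, hc, smul_zero, add_zero]
  rw [aux_right hD, smul_add, smul_smul]
  have : s * (t / s - 1) = t - s := by field_simp
  rw [this, sub_smul]
  module

end Aux

theorem stmt_7 {K L : Type*} [Field K] [CharZero K] [LieRing L] [LieAlgebra K L]
    (hnonperfect : lieDerivedSub K L ≠ ⊤)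
    (t s : K) (ht0 : t ≠ 0) (ht1 : t ≠ 1) (hs0 : s ≠ 0) (hs1 : s ≠ 1) :
    Nonempty (lieDerivSpace K L t ≃ₗ[K] lieDerivSpace K L s) := by
  obtain ⟨q, hq⟩ := Submodule.exists_isCompl (lieDerivedSub K L)
  set p : L →ₗ[K] L :=
    (lieDerivedSub K L).subtype ∘ₗ Submodule.projectionOnto _ q hq with hp
  have hp1 : ∀ x ∈ lieDerivedSub K L, p x = x := fun x hx => by
    simp [hp, (Submodule.projectionOnto_apply_left hq ⟨x, hx⟩ :
      Submodule.projectionOnto _ q hq x = ⟨x, hx⟩)]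
  have hp2 : ∀ x, p x ∈ lieDerivedSub K L := fun x => by
    simp only [hp, LinearMap.comp_apply, Submodule.subtype_apply]
    exact Submodule.coe_mem _
  have hpp : ∀ x, p (p x) = p x := fun x => hp1 _ (hp2 x)
  have key : ∀ (a b : K), a ≠ 0 → b ≠ 0 →
      (a / b - 1) + (b / a - 1) + (b / a - 1) * (a / b - 1) = 0 := by
    intro a b ha hb; field_simp; ring
  refine ⟨LinearEquiv.ofLinear
    ⟨⟨fun D => ⟨D.1 + (t / s - 1) • (D.1 ∘ₗ p),
        aux_map_mem ht0 ht1 hs0 D.2 p hp1 hp2⟩, ?_⟩, ?_⟩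
    ⟨⟨fun D => ⟨D.1 + (s / t - 1) • (D.1 ∘ₗ p),
        aux_map_mem hs0 hs1 ht0 D.2 p hp1 hp2⟩, ?_⟩, ?_⟩ ?_ ?_⟩
  · intro a b; ext x
    simp only [Submodule.coe_add, LinearMap.add_apply, LinearMap.smul_apply,
      LinearMap.comp_apply, Submodule.coe_smul]
    module
  · intro c a; ext x
    simp only [Submodule.coe_smul, LinearMap.smul_apply, LinearMap.add_apply,
      LinearMap.comp_apply, RingHom.id_apply]
    module
  · intro a b; ext x
    simp only [Submodule.coe_add, LinearMap.add_apply, LinearMap.smul_apply,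
      LinearMap.comp_apply, Submodule.coe_smul]
    module
  · intro c a; ext x
    simp only [Submodule.coe_smul, LinearMap.smul_apply, LinearMap.add_apply,
      LinearMap.comp_apply, RingHom.id_apply]
    module
  · ext D x
    simp only [LinearMap.coe_comp, LinearMap.coe_mk, AddHom.coe_mk, Function.comp_apply,
      LinearMap.add_apply, LinearMap.smul_apply, LinearMap.comp_apply, hpp,
      LinearMap.id_coe, id_eq, map_add, map_smul]
    have := key t s ht0 hs0
    set A := (D : L →ₗ[K] L) x
    set B := (D : L →ₗ[K] L) (p x)
    linear_combination (norm := module) this • B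
  · ext D x
    simp only [LinearMap.coe_comp, LinearMap.coe_mk, AddHom.coe_mk, Function.comp_apply,
      LinearMap.add_apply, LinearMap.smul_apply, LinearMap.comp_apply, hpp,
      LinearMap.id_coe, id_eq, map_add, map_smul]
    have := key s t hs0 ht0
    set A := (D : L →ₗ[K] L) x
    set B := (D : L →ₗ[K] L) (p x)
    linear_combination (norm := module) this • B
end

section
/- Let g be a finite-dimensional non-perfect Lie algebra over K (char 0) and t ∈ K with t ≠ 0, t ≠ 1. Then dim Ω(g) ≤ dim D(t,1,0)(g) ≤ dim Ω(g) + dim Hom(⁅g,g⁆, Z(g) ∩ ⁅g,g⁆). -/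
section Aux
variable {K L : Type*} [Field K] [LieRing L] [LieAlgebra K L]

lemma deriv_symm {t : K} {D : L →ₗ[K] L} (hD : D ∈ lieDerivSpace K L t) (A B : L) :
    ⁅D A, B⁆ = ⁅A, D B⁆ := by
  have h1 := hD A B
  have h2 := hD B A
  have hAB : D ⁅A, B⁆ = -D ⁅B, A⁆ := by rw [← map_neg, lie_skew]
  calc ⁅D A, B⁆ = t • D ⁅A, B⁆ := h1.symm
    _ = -(t • D ⁅B, A⁆) := by rw [hAB, smul_neg]
    _ = -⁅D B, A⁆ := by rw [h2]
    _ = ⁅A, D B⁆ := lie_skew _ _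

lemma deriv_central {t : K} (ht1 : t ≠ 1) {D : L →ₗ[K] L}
    (hD : D ∈ lieDerivSpace K L t) (X Y Z : L) : ⁅D ⁅X, Y⁆, Z⁆ = 0 := by
  set A := ⁅D X, ⁅Y, Z⁆⁆ with hA
  set B := ⁅D Y, ⁅X, Z⁆⁆ with hB
  have c1 : ⁅D ⁅X, Y⁆, Z⁆ = A - B := by
    rw [← hD ⁅X, Y⁆ Z, lie_lie, map_sub, smul_sub, hD X ⁅Y, Z⁆, hD Y ⁅X, Z⁆]
  have c2 : ⁅D ⁅X, Y⁆, Z⁆ = t • A - t • B := by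
    calc ⁅D ⁅X, Y⁆, Z⁆ = ⁅⁅X, Y⁆, D Z⁆ := deriv_symm hD _ _
      _ = ⁅X, ⁅Y, D Z⁆⁆ - ⁅Y, ⁅X, D Z⁆⁆ := lie_lie _ _ _
      _ = ⁅X, ⁅D Y, Z⁆⁆ - ⁅Y, ⁅D X, Z⁆⁆ := by
          rw [← deriv_symm hD Y Z, ← deriv_symm hD X Z]
      _ = ⁅X, t • D ⁅Y, Z⁆⁆ - ⁅Y, t • D ⁅X, Z⁆⁆ := by rw [hD Y Z, hD X Z]
      _ = t • ⁅X, D ⁅Y, Z⁆⁆ - t • ⁅Y, D ⁅X, Z⁆⁆ := by rw [lie_smul, lie_smul]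
      _ = t • A - t • B := by
          rw [hA, hB, deriv_symm hD X ⁅Y, Z⁆, deriv_symm hD Y ⁅X, Z⁆]
  have h := c1.symm.trans c2
  have h4 : (1 - t) • (A - B) = 0 := by
    rw [sub_smul, one_smul, smul_sub, ← h]; abel
  rcases smul_eq_zero.mp h4 with h5 | h5
  · exact absurd (sub_eq_zero.mp h5).symm ht1
  · rw [c1, h5]

lemma deriv_maps {t : K} (ht0 : t ≠ 0) (ht1 : t ≠ 1) {D : L →ₗ[K] L}
    (hD : D ∈ lieDerivSpace K L t) :
    ∀ x ∈ lieDerivedSub K L, D x ∈ lieCenterSub K L ⊓ lieDerivedSub K L := by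
  have hle : lieDerivedSub K L ≤ (lieCenterSub K L ⊓ lieDerivedSub K L).comap D := by
    rw [lieDerivedSub, Submodule.span_le]
    rintro z ⟨X, Y, rfl⟩
    simp only [Set.mem_setOf_eq, SetLike.mem_coe, Submodule.mem_comap, Submodule.mem_inf]
    constructor
    · exact fun Z => deriv_central ht1 hD X Y Z
    · have hDxy : D ⁅X, Y⁆ = t⁻¹ • ⁅D X, Y⁆ := by
        rw [← hD X Y, smul_smul, inv_mul_cancel₀ ht0, one_smul]
      rw [hDxy]
      exact Submodule.smul_mem _ _ (Submodule.subset_span ⟨D X, Y, rfl⟩)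
  exact fun x hx => hle hx

end Aux


theorem stmt_11 {K L : Type*} [Field K] [CharZero K] [LieRing L] [LieAlgebra K L]
    [FiniteDimensional K L]
    (hnonperfect : lieDerivedSub K L ≠ ⊤)
    (t : K) (ht0 : t ≠ 0) (ht1 : t ≠ 1) :
    Module.finrank K (lieOmega K L) ≤ Module.finrank K (lieDerivSpace K L t) ∧
      Module.finrank K (lieDerivSpace K L t) ≤
        Module.finrank K (lieOmega K L) +
          Module.finrank K
            (↥(lieDerivedSub K L) →ₗ[K] ↥(lieCenterSub K L ⊓ lieDerivedSub K L)) := by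

  have homega : lieOmega K L ≤ lieDerivSpace K L t := by
    intro T hT X Y
    have h2 : T ⁅X, Y⁆ = 0 := hT.2 ⁅X, Y⁆ (Submodule.subset_span ⟨X, Y, rfl⟩)
    rw [h2, smul_zero, hT.1 X Y]
  constructor
  · exact Submodule.finrank_mono homega
  · let Φ : ↥(lieDerivSpace K L t) →ₗ[K]
        (↥(lieDerivedSub K L) →ₗ[K] ↥(lieCenterSub K L ⊓ lieDerivedSub K L)) :=
      { toFun := fun D =>
          { toFun := fun x => ⟨D.1 x.1, deriv_maps ht0 ht1 D.2 x.1 x.2⟩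
            map_add' := fun x y => by ext; simp
            map_smul' := fun c x => by ext; simp }
        map_add' := fun D E => by ext x; simp
        map_smul' := fun c D => by ext x; simp }
    have hker : Module.finrank K (LinearMap.ker Φ) ≤ Module.finrank K (lieOmega K L) := by
      let ι : ↥(LinearMap.ker Φ) →ₗ[K] ↥(lieOmega K L) :=
        { toFun := fun D => ⟨D.1.1, by
            have hmem := D.2
            rw [LinearMap.mem_ker] at hmem
            have hzero : ∀ x ∈ lieDerivedSub K L, D.1.1 x = 0 := by
              intro x hx
              have h5 : (Φ D.1) ⟨x, hx⟩ = 0 := by rw [hmem]; rfl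
              exact congrArg Subtype.val h5
            constructor
            · intro x y
              rw [← D.1.2 x y, hzero ⁅x, y⁆ (Submodule.subset_span ⟨x, y, rfl⟩), smul_zero]
            · exact hzero⟩
          map_add' := fun a b => rfl
          map_smul' := fun c a => rfl }
      have hinj : Function.Injective ι := by
        intro a b hab
        have : (a.1.1 : L →ₗ[K] L) = b.1.1 := congrArg (fun z : ↥(lieOmega K L) => z.1) hab
        exact Subtype.ext (Subtype.ext this)
      exact LinearMap.finrank_le_finrank_of_injective hinj
    have hrange : Module.finrank K (LinearMap.range Φ) ≤
        Module.finrank K (↥(lieDerivedSub K L) →ₗ[K] ↥(lieCenterSub K L ⊓ lieDerivedSub K L)) :=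
      Submodule.finrank_le _
    have hrn := LinearMap.finrank_range_add_finrank_ker Φ
    omega
end

section
/- Let A be an anti-commutative algebra over K (char 0), and suppose B is a subalgebra of A such that A = B ⊕ Z(A) as vector spaces, where Z(A) is the center. Let t ∈ K, t ≠ 0. Then D(t,1,0)(A) is linearly isomorphic to D(t,1,0)(B) × Hom(A/A^(2), Z(A)). -/
section Defs
variable {K V : Type*} [Field K] [AddCommGroup V] [Module K V]

/-- The space of (t,1,0)-derivations of an algebra with product μ. -/
def derivSpace (μ : V →ₗ[K] V →ₗ[K] V) (t : K) : Submodule K (V →ₗ[K] V) where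
  carrier := {D | ∀ X Y : V, t • D (μ X Y) = μ (D X) Y}
  add_mem' := by
    intro a b ha hb X Y
    simp only [LinearMap.add_apply, smul_add, ha X Y, hb X Y, map_add, LinearMap.add_apply]
  zero_mem' := by intro X Y; simp
  smul_mem' := by
    intro c a ha X Y
    simp only [LinearMap.smul_apply, map_smul, LinearMap.smul_apply, smul_comm t c, ha X Y]

/-- The center of the algebra, as a submodule. -/
def centerSub (μ : V →ₗ[K] V →ₗ[K] V) : Submodule K V where
  carrier := {X | ∀ Y : V, μ X Y = 0}
  add_mem' := by intro a b ha hb Y; simp [ha Y, hb Y]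
  zero_mem' := by intro Y; simp
  smul_mem' := by intro c a ha Y; simp [ha Y]

/-- The derived subalgebra (span of all products), as a submodule. -/
def derivedSub (μ : V →ₗ[K] V →ₗ[K] V) : Submodule K V :=
  Submodule.span K {z | ∃ X Y : V, μ X Y = z}

/-- The space Ω of linear maps with image in the center killing the derived subalgebra. -/
def omegaSub (μ : V →ₗ[K] V →ₗ[K] V) : Submodule K (V →ₗ[K] V) where
  carrier := {T | (∀ x y : V, μ (T x) y = 0) ∧ ∀ x ∈ derivedSub μ, T x = 0}
  add_mem' := by
    intro a b ha hb
    refine ⟨fun x y => ?_, fun x hx => ?_⟩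
    · simp [ha.1 x y, hb.1 x y]
    · simp [ha.2 x hx, hb.2 x hx]
  zero_mem' := ⟨by simp, by simp⟩
  smul_mem' := by
    intro c a ha
    refine ⟨fun x y => ?_, fun x hx => ?_⟩
    · simp [ha.1 x y]
    · simp [ha.2 x hx]

end Defs

theorem stmt_12 {K V : Type*} [Field K] [CharZero K] [AddCommGroup V] [Module K V]
    (μ : V →ₗ[K] V →ₗ[K] V) (hanti : ∀ X Y : V, μ X Y = -μ Y X)
    (B : Submodule K V) (hB : ∀ x ∈ B, ∀ y ∈ B, μ x y ∈ B)
    (μB : ↥B →ₗ[K] ↥B →ₗ[K] ↥B) (hμB : ∀ x y : B, (μB x y : V) = μ (x : V) (y : V))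
    (hcompl : IsCompl B (centerSub μ))
    (t : K) (ht : t ≠ 0) :
    Nonempty (derivSpace μ t ≃ₗ[K]
      derivSpace μB t × ((V ⧸ derivedSub μ) →ₗ[K] ↥(centerSub μ))) := by
  classical
  set πB := B.projectionOnto (centerSub μ) hcompl with hπBdef
  set πZ := (centerSub μ).projectionOnto B hcompl.symm with hπZdef
  have hsum : ∀ x : V, (πB x : V) + (πZ x : V) = x := fun x =>
    Submodule.projection_add_projection_eq_self hcompl x
  have hZl : ∀ z ∈ centerSub μ, ∀ y : V, μ z y = 0 := fun z hz y => hz y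
  have hZr : ∀ (y : V), ∀ z ∈ centerSub μ, μ y z = 0 := fun y z hz => by
    rw [hanti]; rw [hz y]; simp
  -- μ only sees the B-components
  have hμl : ∀ X Y : V, μ (πB X : V) Y = μ X Y := by
    intro X Y
    conv_rhs => rw [← hsum X]
    simp [hZl _ (πZ X).2]
  have hμr : ∀ X Y : V, μ X (πB Y : V) = μ X Y := by
    intro X Y
    conv_rhs => rw [← hsum Y]
    simp [hZr X _ (πZ Y).2]
  have hA2B : ∀ X Y : V, μ X Y ∈ B := by
    intro X Y
    rw [← hμl, ← hμr]
    exact hB _ (πB X).2 _ (πB Y).2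
  have hμmem : ∀ X Y : V, μ X Y ∈ derivedSub μ :=
    fun X Y => Submodule.subset_span ⟨X, Y, rfl⟩
  -- facts about derivations D
  have hDZ : ∀ D : derivSpace μ t, ∀ x ∈ centerSub μ, D.1 x ∈ centerSub μ := by
    intro D x hx Y
    have h1 := D.2 x Y
    rw [hx Y] at h1
    simpa using h1.symm
  have hDμ : ∀ D : derivSpace μ t, ∀ X Y : V, D.1 (μ X Y) ∈ B := by
    intro D X Y
    have h1 := D.2 X Y
    have h2 : D.1 (μ X Y) = t⁻¹ • (t • D.1 (μ X Y)) := by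
      rw [smul_smul, inv_mul_cancel₀ ht, one_smul]
    rw [h2, h1]
    exact B.smul_mem _ (hA2B _ _)
  -- πB of D applied to μ X Y is D (μ X Y) itself
  have hπBDμ : ∀ D : derivSpace μ t, ∀ X Y : V,
      (πB (D.1 (μ X Y)) : V) = D.1 (μ X Y) := by
    intro D X Y
    have := Submodule.linearProjOfIsCompl_apply_left hcompl ⟨D.1 (μ X Y), hDμ D X Y⟩
    rw [hπBdef]
    exact congrArg Subtype.val this
  -- forward map, first component
  have hfwd1 : ∀ D : derivSpace μ t,
      (πB ∘ₗ D.1 ∘ₗ B.subtype) ∈ derivSpace μB t := by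
    intro D x y
    apply Subtype.ext
    have hcoe : ((μB x y : B) : V) = μ (x : V) (y : V) := hμB x y
    calc ((t • (πB ∘ₗ D.1 ∘ₗ B.subtype) (μB x y) : B) : V)
        = t • (πB (D.1 (μ (x : V) (y : V))) : V) := by
          simp [hcoe]
      _ = t • D.1 (μ (x : V) (y : V)) := by rw [hπBDμ D]
      _ = μ (D.1 (x : V)) (y : V) := D.2 _ _
      _ = μ (πB (D.1 (x : V)) : V) (y : V) := (hμl _ _).symm
      _ = ((μB ((πB ∘ₗ D.1 ∘ₗ B.subtype) x) y : B) : V) := by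
          rw [hμB]; simp
  -- forward map, second component kills derived subalgebra
  have hfwd2 : ∀ D : derivSpace μ t,
      derivedSub μ ≤ LinearMap.ker (πZ ∘ₗ D.1) := by
    intro D
    rw [derivedSub, Submodule.span_le]
    rintro z ⟨X, Y, rfl⟩
    simp only [SetLike.mem_coe, LinearMap.mem_ker, LinearMap.comp_apply]
    rw [hπZdef]
    exact Submodule.projectionOnto_apply_of_mem_right hcompl.symm (hDμ D X Y)
  -- backward map
  have hbwd : ∀ (D' : derivSpace μB t) (T : (V ⧸ derivedSub μ) →ₗ[K] centerSub μ),
      (B.subtype ∘ₗ (D'.1 : ↥B →ₗ[K] ↥B) ∘ₗ πB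
        + (centerSub μ).subtype ∘ₗ T ∘ₗ (derivedSub μ).mkQ) ∈ derivSpace μ t := by
    intro D' T X Y
    have hq : (derivedSub μ).mkQ (μ X Y) = 0 := by
      rw [Submodule.mkQ_apply, Submodule.Quotient.mk_eq_zero]
      exact hμmem X Y
    have hπBμ : πB (μ X Y) = μB (πB X) (πB Y) := by
      apply Subtype.ext
      rw [hμB]
      rw [hμl, hμr]
      have := Submodule.linearProjOfIsCompl_apply_left hcompl ⟨μ X Y, hA2B X Y⟩
      rw [hπBdef]
      exact congrArg Subtype.val this
    simp only [LinearMap.add_apply, LinearMap.comp_apply, hq, map_zero,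
      Submodule.coe_subtype, Submodule.coe_zero, add_zero, smul_add, map_add]
    rw [hπBμ]
    have h1 : (((t • D'.1 (μB (πB X) (πB Y)) : B)) : V)
        = ((μB (D'.1 (πB X)) (πB Y) : B) : V) := by
      exact_mod_cast congrArg Subtype.val (D'.2 (πB X) (πB Y))
    have h2 : μ ((T ((derivedSub μ).mkQ X) : V)) Y = 0 :=
      hZl _ (T ((derivedSub μ).mkQ X)).2 Y
    rw [h2, add_zero]
    calc t • ((D'.1 (μB (πB X) (πB Y)) : B) : V)
        = ((t • D'.1 (μB (πB X) (πB Y)) : B) : V) := by push_cast; ring_nf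
      _ = ((μB (D'.1 (πB X)) (πB Y) : B) : V) := h1
      _ = μ ((D'.1 (πB X) : V)) (πB Y : V) := hμB _ _
      _ = μ ((D'.1 (πB X) : V)) Y := hμr _ _
  -- the equivalence
  refine ⟨{
    toFun := fun D => (⟨πB ∘ₗ D.1 ∘ₗ B.subtype, hfwd1 D⟩,
      (derivedSub μ).liftQ (πZ ∘ₗ D.1) (hfwd2 D)),
    invFun := fun p => ⟨B.subtype ∘ₗ (p.1.1 : ↥B →ₗ[K] ↥B) ∘ₗ πB
        + (centerSub μ).subtype ∘ₗ p.2 ∘ₗ (derivedSub μ).mkQ, hbwd p.1 p.2⟩,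
    map_add' := ?_, map_smul' := ?_, left_inv := ?_, right_inv := ?_ }⟩
  · intro D E
    refine Prod.ext ?_ ?_
    · apply Subtype.ext
      ext x
      simp
    · apply Submodule.linearMap_qext
      ext x
      simp [Submodule.liftQ_apply]
  · intro c D
    refine Prod.ext ?_ ?_
    · apply Subtype.ext
      ext x
      simp
    · apply Submodule.linearMap_qext
      ext x
      simp [Submodule.liftQ_apply]
  · intro D
    apply Subtype.ext
    ext X
    simp only [LinearMap.add_apply, LinearMap.comp_apply, Submodule.coe_subtype,
      Submodule.mkQ_apply, Submodule.liftQ_apply]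
    -- goal: ↑((πB ∘ D ∘ ι)(πB X)) + ↑(πZ (D X)) = D X
    have hDz : D.1 ((πZ X : V)) ∈ centerSub μ := hDZ D _ (πZ X).2
    have h1 : D.1 ((πB X : V)) = D.1 X - D.1 ((πZ X : V)) := by
      rw [eq_sub_iff_add_eq, ← map_add, hsum]
    have h2 : (πB (D.1 ((πZ X : V))) : V) = 0 := by
      rw [hπBdef]
      rw [Submodule.projectionOnto_apply_of_mem_right hcompl hDz]
      simp
    have h3 : (πB (D.1 ((πB X : V))) : V) = (πB (D.1 X) : V) := by
      rw [h1, map_sub]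
      push_cast
      rw [h2, sub_zero]
    rw [h3]
    exact hsum (D.1 X)
  · rintro ⟨D', T⟩
    refine Prod.ext ?_ ?_
    · apply Subtype.ext
      ext b
      simp only [LinearMap.comp_apply, Submodule.coe_subtype, LinearMap.add_apply,
        Submodule.mkQ_apply]
      have hb : πB ((b : V)) = b := Submodule.linearProjOfIsCompl_apply_left hcompl b
      have hz : (πB ((T (Submodule.Quotient.mk (b : V)) : V)) : V) = 0 := by
        rw [hπBdef, Submodule.projectionOnto_apply_of_mem_right hcompl
          (T (Submodule.Quotient.mk (b : V))).2]
        simp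
      rw [map_add, hb]
      push_cast
      rw [hz, add_zero]
      exact congrArg Subtype.val
        (Submodule.linearProjOfIsCompl_apply_left hcompl (D'.1 b))
    · apply Submodule.linearMap_qext
      ext x
      simp only [LinearMap.comp_apply, Submodule.mkQ_apply, Submodule.liftQ_apply,
        LinearMap.add_apply, Submodule.coe_subtype]
      rw [map_add]
      have h1 : (πZ ((D'.1 (πB x) : V)) : V) = 0 := by
        rw [hπZdef, Submodule.projectionOnto_apply_of_mem_right hcompl.symm (D'.1 (πB x)).2]
        simp
      have h2 : πZ ((T (Submodule.Quotient.mk x) : V)) = T (Submodule.Quotient.mk x) :=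
        Submodule.linearProjOfIsCompl_apply_left hcompl.symm (T (Submodule.Quotient.mk x))
      push_cast
      rw [h1, zero_add]
      exact congrArg Subtype.val h2
end

section
/- Let K be an algebraically closed field of characteristic zero, t ∈ K with t ≠ 0, t ≠ 1, and t not a root of unity. Let A be a finite-dimensional anti-commutative K-algebra with trivial center. Then every (t,1,0)-derivation of A is a nilpotent linear transformation. -/
theorem stmt_13 {K V : Type*} [Field K] [CharZero K] [IsAlgClosed K]
    [AddCommGroup V] [Module K V] [FiniteDimensional K V]
    (μ : V →ₗ[K] V →ₗ[K] V) (hanti : ∀ X Y : V, μ X Y = -μ Y X)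
    (t : K) (ht0 : t ≠ 0) (ht1 : t ≠ 1) (hroot : ∀ n : ℕ, n ≠ 0 → t ^ n ≠ 1)
    (hcenter : centerSub μ = ⊥)
    (D : V →ₗ[K] V) (hD : ∀ X Y : V, t • D (μ X Y) = μ (D X) Y) :
    ∃ n : ℕ, D ^ n = 0 := by
  classical
  -- D is integral, so minpoly is nonzero and monic
  have hint : IsIntegral K D := Algebra.IsIntegral.isIntegral D
  set p := minpoly K D with hp
  have hpne : p ≠ 0 := minpoly.ne_zero hint
  have hmon : p.Monic := minpoly.monic hint
  -- eigenvalue shift: if lam ≠ 0 is an eigenvalue, so is t⁻¹ * lam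
  have key : ∀ lam : K, lam ≠ 0 → Module.End.HasEigenvalue D lam →
      Module.End.HasEigenvalue D (t⁻¹ * lam) := by
    intro lam hlam hev
    obtain ⟨x, hx⟩ := hev.exists_hasEigenvector
    have hx0 : x ≠ 0 := hx.2
    have hxe : D x = lam • x := hx.apply_eq_smul
    -- x is not in the center, so there is y with μ x y ≠ 0
    have : ¬ (∀ Y : V, μ x Y = 0) := by
      intro h
      have : x ∈ centerSub μ := h
      rw [hcenter, Submodule.mem_bot] at this
      exact hx0 this
    push_neg at this
    obtain ⟨y, hy⟩ := this
    have hz : t • D (μ x y) = lam • μ x y := by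
      rw [hD x y, hxe]
      simp
    have hz' : D (μ x y) = (t⁻¹ * lam) • μ x y := by
      have := congrArg (fun v => t⁻¹ • v) hz
      simpa [smul_smul, inv_mul_cancel₀ ht0] using this
    exact Module.End.hasEigenvalue_of_hasEigenvector
      ⟨Module.End.mem_eigenspace_iff.mpr hz', hy⟩
  -- hence all powers t⁻¹ ^ n * lam are eigenvalues
  have chain : ∀ lam : K, lam ≠ 0 → Module.End.HasEigenvalue D lam →
      ∀ n : ℕ, Module.End.HasEigenvalue D (t⁻¹ ^ n * lam) := by
    intro lam hlam hev n
    induction n with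
    | zero => simpa using hev
    | succ n ih =>
        have hne : t⁻¹ ^ n * lam ≠ 0 :=
          mul_ne_zero (pow_ne_zero _ (inv_ne_zero ht0)) hlam
        have := key _ hne ih
        rw [← mul_assoc, ← pow_succ'] at this
        exact this
  -- every eigenvalue is zero
  have hzero : ∀ lam : K, Module.End.HasEigenvalue D lam → lam = 0 := by
    intro lam hev
    by_contra hlam
    have hfin : Set.Finite {x : K | Polynomial.IsRoot p x} :=
      Polynomial.finite_setOf_isRoot hpne
    have hinj : Function.Injective (fun n : ℕ => t⁻¹ ^ n * lam) := by
      intro m n hmn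
      simp only at hmn
      have h2 : t⁻¹ ^ m = t⁻¹ ^ n := mul_right_cancel₀ hlam hmn
      have h3 : t ^ m = t ^ n := by
        have := congrArg (fun z : K => z⁻¹) h2
        simpa using this
      by_contra hne
      rcases Nat.lt_or_ge m n with h | h
      · have : t ^ (n - m) = 1 := by
          have hn : t ^ n = t ^ m * t ^ (n - m) := by
            rw [← pow_add]
            congr 1
            omega
          rw [hn] at h3
          field_simp at h3
          tauto
        exact hroot (n - m) (by omega) this
      · have h' : m ≠ n := hne
        have hlt : n < m := by omega
        have : t ^ (m - n) = 1 := by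
          have hn : t ^ m = t ^ n * t ^ (m - n) := by
            rw [← pow_add]
            congr 1
            omega
          rw [hn] at h3
          field_simp at h3
          tauto
        exact hroot (m - n) (by omega) this
    have hmem : ∀ n : ℕ, (fun n : ℕ => t⁻¹ ^ n * lam) n ∈ {x : K | Polynomial.IsRoot p x} := by
      intro n
      exact (Module.End.hasEigenvalue_iff_isRoot).mp (chain lam hlam hev n)
    exact (Set.infinite_of_injective_forall_mem hinj hmem) hfin
  -- the minimal polynomial splits and all its roots are zero, so p = X ^ d
  have hsplit : p.Splits := IsAlgClosed.splits p
  have hroots : ∀ r ∈ p.roots, r = 0 := by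
    intro r hr
    exact hzero r (Module.End.hasEigenvalue_iff_isRoot.mpr (Polynomial.isRoot_of_mem_roots hr))
  have hpX : p = Polynomial.X ^ (Multiset.card p.roots) := by
    have h1 := hsplit.eq_prod_roots_of_monic hmon
    conv_lhs => rw [h1]
    have : p.roots.map (fun a => Polynomial.X - Polynomial.C a)
        = Multiset.replicate (Multiset.card p.roots) (Polynomial.X : Polynomial K) := by
      rw [Multiset.eq_replicate]
      constructor
      · simp
      · intro b hb
        obtain ⟨a, ha, rfl⟩ := Multiset.mem_map.mp hb
        rw [hroots a ha]
        simp
    rw [this, Multiset.prod_replicate]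
  refine ⟨Multiset.card p.roots, ?_⟩
  have := minpoly.aeval K D
  rw [← hp, hpX] at this
  simpa using this
end

section
/- Fix a field K of characteristic zero and s, t ∈ K with t ≠ 0, t ≠ 1. Let A_s be the 4-dimensional anti-commutative algebra with basis e₁,e₂,e₃,e₄ and nonzero products μ(e₁,e₃)=e₁, μ(e₁,e₄)=s·e₂, μ(e₂,e₃)=s·e₂ (extended anti-symmetrically). Then: if s = t, the space of (t,1,0)-derivations of A_s is 1-dimensional, spanned by the map D with D e₁ = e₂, D e₃ = e₄, D e₂ = D e₄ = 0; and if s ≠ t and s ≠ 0, the only (t,1,0)-derivation of A_s is zero. -/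
theorem stmt_14 {K : Type*} [Field K] [CharZero K] (s t : K) (ht0 : t ≠ 0) (ht1 : t ≠ 1)
    (μ : (Fin 4 → K) →ₗ[K] (Fin 4 → K) →ₗ[K] (Fin 4 → K))
    (hanti : ∀ X Y : Fin 4 → K, μ X Y = -μ Y X)
    (e : Fin 4 → Fin 4 → K) (he : ∀ i, e i = Pi.single i 1)
    (h13 : μ (e 0) (e 2) = e 0)
    (h14 : μ (e 0) (e 3) = s • e 1)
    (h23 : μ (e 1) (e 2) = s • e 1)
    (h12 : μ (e 0) (e 1) = 0) (h24 : μ (e 1) (e 3) = 0) (h34 : μ (e 2) (e 3) = 0) :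
    (s = t →
      ∀ D₀ : (Fin 4 → K) →ₗ[K] (Fin 4 → K),
        D₀ (e 0) = e 1 → D₀ (e 2) = e 3 → D₀ (e 1) = 0 → D₀ (e 3) = 0 →
        (∀ X Y : Fin 4 → K, t • D₀ (μ X Y) = μ (D₀ X) Y) ∧
          ∀ D : (Fin 4 → K) →ₗ[K] (Fin 4 → K),
            (∀ X Y : Fin 4 → K, t • D (μ X Y) = μ (D X) Y) → ∃ c : K, D = c • D₀) ∧
    (s ≠ t → s ≠ 0 →
      ∀ D : (Fin 4 → K) →ₗ[K] (Fin 4 → K),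
        (∀ X Y : Fin 4 → K, t • D (μ X Y) = μ (D X) Y) → D = 0) := by
  have hXX : ∀ X : Fin 4 → K, μ X X = 0 := by
    intro X
    have h := hanti X X
    have h2 : (2:K) • μ X X = 0 := by
      rw [two_smul]; nth_rewrite 1 [h]; simp
    simpa [smul_eq_zero, (by norm_num : (2:K) ≠ 0)] using h2
  have hdecomp : ∀ X : Fin 4 → K, X = X 0 • e 0 + X 1 • e 1 + X 2 • e 2 + X 3 • e 3 := by
    intro X
    funext k
    fin_cases k <;> simp [he, Pi.single_apply]
  have hμgen : ∀ X Y : Fin 4 → K, μ X Y =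
      (X 0 * Y 2 - X 2 * Y 0) • e 0 +
        (s * (X 0 * Y 3 + X 1 * Y 2 - X 3 * Y 0 - X 2 * Y 1)) • e 1 := by
    intro X Y
    have h20 : μ (e 2) (e 0) = -(e 0) := by rw [hanti, h13]
    have h31 : μ (e 1) (e 0) = 0 := by rw [hanti, h12]; simp
    have h30 : μ (e 3) (e 0) = -(s • e 1) := by rw [hanti, h14]
    have h32 : μ (e 2) (e 1) = -(s • e 1) := by rw [hanti, h23]
    have h42 : μ (e 3) (e 1) = 0 := by rw [hanti, h24]; simp
    have h43 : μ (e 2) (e 2) = 0 := hXX _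
    have h00 : μ (e 0) (e 0) = 0 := hXX _
    have h11 : μ (e 1) (e 1) = 0 := hXX _
    have h33 : μ (e 3) (e 3) = 0 := hXX _
    have h320 : μ (e 3) (e 2) = 0 := by rw [hanti, h34]; simp
    conv_lhs => rw [hdecomp X, hdecomp Y]
    simp only [map_add, map_smul, LinearMap.add_apply, LinearMap.smul_apply,
      h13, h14, h23, h12, h24, h34, h20, h31, h30, h32, h42, h43, h00, h11, h33, h320]
    module
  have main : ∀ D : (Fin 4 → K) →ₗ[K] (Fin 4 → K),
      (∀ X Y : Fin 4 → K, t • D (μ X Y) = μ (D X) Y) → s ≠ 0 →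
      D (e 1) = 0 ∧ D (e 3) = 0 ∧ D (e 0) = D (e 0) 1 • e 1 ∧
        D (e 2) = D (e 2) 3 • e 3 ∧ s * D (e 2) 3 = t * D (e 0) 1 ∧
        (t = s ∨ D (e 0) 1 = 0) := by
    intro D hD hs0
    have E020 := congrFun (hD (e 0) (e 2)) 0
    rw [hμgen (e 0) (e 2), hμgen (D (e 0)) (e 2)] at E020
    simp [he, Pi.single_apply, map_add, map_smul] at E020
    have E021 := congrFun (hD (e 0) (e 2)) 1
    rw [hμgen (e 0) (e 2), hμgen (D (e 0)) (e 2)] at E021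
    simp [he, Pi.single_apply, map_add, map_smul] at E021
    have E022 := congrFun (hD (e 0) (e 2)) 2
    rw [hμgen (e 0) (e 2), hμgen (D (e 0)) (e 2)] at E022
    simp [he, Pi.single_apply, map_add, map_smul] at E022
    have E023 := congrFun (hD (e 0) (e 2)) 3
    rw [hμgen (e 0) (e 2), hμgen (D (e 0)) (e 2)] at E023
    simp [he, Pi.single_apply, map_add, map_smul] at E023
    have E131 := congrFun (hD (e 1) (e 3)) 1
    rw [hμgen (e 1) (e 3), hμgen (D (e 1)) (e 3)] at E131
    simp [he, Pi.single_apply, map_add, map_smul] at E131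
    have E031 := congrFun (hD (e 0) (e 3)) 1
    rw [hμgen (e 0) (e 3), hμgen (D (e 0)) (e 3)] at E031
    simp [he, Pi.single_apply, map_add, map_smul] at E031
    have E100 := congrFun (hD (e 1) (e 0)) 0
    rw [hμgen (e 1) (e 0), hμgen (D (e 1)) (e 0)] at E100
    simp [he, Pi.single_apply, map_add, map_smul] at E100
    have E101 := congrFun (hD (e 1) (e 0)) 1
    rw [hμgen (e 1) (e 0), hμgen (D (e 1)) (e 0)] at E101
    simp [he, Pi.single_apply, map_add, map_smul] at E101
    have E220 := congrFun (hD (e 2) (e 2)) 0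
    rw [hμgen (e 2) (e 2), hμgen (D (e 2)) (e 2)] at E220
    simp [he, Pi.single_apply, map_add, map_smul] at E220
    have E221 := congrFun (hD (e 2) (e 2)) 1
    rw [hμgen (e 2) (e 2), hμgen (D (e 2)) (e 2)] at E221
    simp [he, Pi.single_apply, map_add, map_smul] at E221
    have E200 := congrFun (hD (e 2) (e 0)) 0
    rw [hμgen (e 2) (e 0), hμgen (D (e 2)) (e 0)] at E200
    simp [he, Pi.single_apply, map_add, map_smul] at E200
    have E201 := congrFun (hD (e 2) (e 0)) 1
    rw [hμgen (e 2) (e 0), hμgen (D (e 2)) (e 0)] at E201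
    simp [he, Pi.single_apply, map_add, map_smul] at E201
    have E320 := congrFun (hD (e 3) (e 2)) 0
    rw [hμgen (e 3) (e 2), hμgen (D (e 3)) (e 2)] at E320
    simp [he, Pi.single_apply, map_add, map_smul] at E320
    have E321 := congrFun (hD (e 3) (e 2)) 1
    rw [hμgen (e 3) (e 2), hμgen (D (e 3)) (e 2)] at E321
    simp [he, Pi.single_apply, map_add, map_smul] at E321
    have E311 := congrFun (hD (e 3) (e 1)) 1
    rw [hμgen (e 3) (e 1), hμgen (D (e 3)) (e 1)] at E311
    simp [he, Pi.single_apply, map_add, map_smul] at E311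
    have E301 := congrFun (hD (e 3) (e 0)) 1
    rw [hμgen (e 3) (e 0), hμgen (D (e 3)) (e 0)] at E301
    simp [he, Pi.single_apply, map_add, map_smul] at E301
    -- resolve disjunctions
    have a0 : D (Pi.single 0 1 : Fin 4 → K) 0 = 0 := by
      have h : (t - 1) * D (Pi.single 0 1 : Fin 4 → K) 0 = 0 := by linear_combination E020
      exact (mul_eq_zero.mp h).resolve_left (sub_ne_zero.mpr ht1)
    have a2 : D (Pi.single 0 1 : Fin 4 → K) 2 = 0 := E022.resolve_left ht0
    have a3 : D (Pi.single 0 1 : Fin 4 → K) 3 = 0 := E023.resolve_left ht0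
    have b0 : D (Pi.single 1 1 : Fin 4 → K) 0 = 0 := E131.resolve_left hs0
    have b1 : D (Pi.single 1 1 : Fin 4 → K) 1 = 0 := by
      rw [a0, mul_zero] at E031
      rcases mul_eq_zero.mp E031 with h | h
      · exact absurd h ht0
      · rcases mul_eq_zero.mp h with h | h
        · exact absurd h hs0
        · exact h
    have b2 : D (Pi.single 1 1 : Fin 4 → K) 2 = 0 := E100
    have b3 : D (Pi.single 1 1 : Fin 4 → K) 3 = 0 := E101.resolve_left hs0
    have c0 : D (Pi.single 2 1 : Fin 4 → K) 0 = 0 := E220.symm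
    have c1 : D (Pi.single 2 1 : Fin 4 → K) 1 = 0 := E221.resolve_left hs0
    have c2 : D (Pi.single 2 1 : Fin 4 → K) 2 = 0 := by rw [a0, mul_zero] at E200; exact E200.symm
    have d0 : D (Pi.single 3 1 : Fin 4 → K) 0 = 0 := E320.symm
    have d1 : D (Pi.single 3 1 : Fin 4 → K) 1 = 0 := E321.resolve_left hs0
    have d2 : D (Pi.single 3 1 : Fin 4 → K) 2 = 0 := E311.resolve_left hs0
    have d3 : D (Pi.single 3 1 : Fin 4 → K) 3 = 0 := by
      rw [b1, mul_zero, mul_zero] at E301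
      rcases mul_eq_zero.mp E301.symm with h | h
      · exact absurd h hs0
      · exact h
    refine ⟨?_, ?_, ?_, ?_, ?_, ?_⟩
    · funext k; fin_cases k <;> simp [he, b0, b1, b2, b3]
    · funext k; fin_cases k <;> simp [he, d0, d1, d2, d3]
    · funext k; fin_cases k <;> simp [he, Pi.single_apply, a0, a2, a3]
    · funext k; fin_cases k <;> simp [he, Pi.single_apply, c0, c1, c2]
    · simp only [he]; linear_combination -E201
    · simp only [he]
      rcases eq_or_ne t s with h | h
      · exact Or.inl h
      · right
        have := E021
        rcases this with h' | h'
        · exact absurd h' h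
        · exact h'
  constructor
  · intro hst D₀ hd0 hd2 hd1 hd3
    have hs0 : s ≠ 0 := hst ▸ ht0
    constructor
    · intro X Y
      have hDX : D₀ X = X 0 • e 1 + X 2 • e 3 := by
        conv_lhs => rw [hdecomp X]
        simp [map_add, map_smul, hd0, hd1, hd2, hd3]
      have hd0' := hd0; have hd1' := hd1
      simp only [he] at hd0' hd1'
      rw [hμgen X Y, hDX, hμgen (X 0 • e 1 + X 2 • e 3) Y]
      subst hst
      simp [he, Pi.single_apply, map_add, map_smul, hd0', hd1']
      module
    · intro D hD
      obtain ⟨hb, hd, ha, hc, hsc, _⟩ := main D hD hs0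
      set cc := D (e 0) 1 with hcc
      set dd := D (e 2) 3 with hdd
      refine ⟨cc, ?_⟩
      have hc3 : dd = cc := by
        rw [hst] at hsc
        exact mul_left_cancel₀ ht0 hsc
      apply LinearMap.ext
      intro X
      conv_lhs => rw [hdecomp X]
      rw [LinearMap.smul_apply]
      conv_rhs => rw [hdecomp X]
      rw [hc3] at hc
      simp only [map_add, map_smul, hb, hd, ha, hc, hd0, hd1, hd2, hd3]
      module
  · intro hst hs0 D hD
    obtain ⟨hb, hd, ha, hc, hsc, hor⟩ := main D hD hs0
    have a1 : D (e 0) 1 = 0 := by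
      rcases hor with h | h
      · exact absurd h.symm hst
      · exact h
    have c3 : D (e 2) 3 = 0 := by
      rw [a1, mul_zero] at hsc
      exact (mul_eq_zero.mp hsc).resolve_left hs0
    rw [a1, zero_smul] at ha
    rw [c3, zero_smul] at hc
    apply LinearMap.ext
    intro X
    conv_lhs => rw [hdecomp X]
    simp [map_add, map_smul, hb, hd, ha, hc]
end

section
/- Let K have characteristic zero and t ∈ K with t ≠ 0, t ≠ 1. Let h₃ be the 3-dimensional Heisenberg Lie algebra with basis e₁,e₂,e₃ and ⁅e₁,e₂⁆ = e₃. Then the space of (t,1,0)-derivations of h₃ is 3-dimensional. -/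
set_option maxHeartbeats 1000000 in
theorem stmt_15 {K : Type*} [Field K] [CharZero K] (t : K) (ht0 : t ≠ 0) (ht1 : t ≠ 1)
    (μ : (Fin 3 → K) →ₗ[K] (Fin 3 → K) →ₗ[K] (Fin 3 → K))
    (hanti : ∀ X Y : Fin 3 → K, μ X Y = -μ Y X)
    (e : Fin 3 → Fin 3 → K) (he : ∀ i, e i = Pi.single i 1)
    (h12 : μ (e 0) (e 1) = e 2)
    (h13 : μ (e 0) (e 2) = 0) (h23 : μ (e 1) (e 2) = 0) :
    Module.finrank K (derivSpace μ t) = 3 := by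

  classical
  have hself : ∀ X : Fin 3 → K, μ X X = 0 := by
    intro X
    have h2 : (2 : K) • μ X X = 0 := by
      rw [two_smul]; nth_rewrite 1 [hanti]; simp
    exact (smul_eq_zero.mp h2).resolve_left two_ne_zero
  have h10 : μ (e 1) (e 0) = -e 2 := by rw [hanti, h12]
  have h20 : μ (e 2) (e 0) = 0 := by rw [hanti, h13, neg_zero]
  have h21 : μ (e 2) (e 1) = 0 := by rw [hanti, h23, neg_zero]
  have hb : ∀ i, (Pi.basisFun K (Fin 3)) i = e i := by
    intro i; rw [he]; ext j; simp [Pi.basisFun_apply]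
  have hμ : ∀ X Y : Fin 3 → K, μ X Y = (X 0 * Y 1 - X 1 * Y 0) • e 2 := by
    have key : μ = LinearMap.mk₂ K (fun X Y : Fin 3 → K => (X 0 * Y 1 - X 1 * Y 0) • e 2)
        (by intro X X' Y; simp only [Pi.add_apply]; rw [← add_smul]; congr 1; ring)
        (by intro c X Y; simp only [Pi.smul_apply, smul_eq_mul]; rw [smul_smul]; congr 1; ring)
        (by intro X Y Y'; simp only [Pi.add_apply]; rw [← add_smul]; congr 1; ring)
        (by intro c X Y; simp only [Pi.smul_apply, smul_eq_mul]; rw [smul_smul]; congr 1; ring) := by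
      apply LinearMap.ext_basis (Pi.basisFun K (Fin 3)) (Pi.basisFun K (Fin 3))
      intro i j
      have H12 : μ (Pi.single 0 1) (Pi.single 1 1) = Pi.single 2 (1:K) := by
        simpa only [he] using h12
      have H13 : μ (Pi.single 0 1) (Pi.single 2 1) = (0 : Fin 3 → K) := by
        simpa only [he] using h13
      have H23 : μ (Pi.single 1 1) (Pi.single 2 1) = (0 : Fin 3 → K) := by
        simpa only [he] using h23
      have H10 : μ (Pi.single 1 1) (Pi.single 0 1) = -Pi.single 2 (1:K) := by
        simpa only [he] using h10
      have H20 : μ (Pi.single 2 1) (Pi.single 0 1) = (0 : Fin 3 → K) := by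
        simpa only [he] using h20
      have H21 : μ (Pi.single 2 1) (Pi.single 1 1) = (0 : Fin 3 → K) := by
        simpa only [he] using h21
      have Hself : ∀ i : Fin 3, μ (Pi.single i 1) (Pi.single i (1:K)) = 0 := fun i => hself _
      simp only [hb]
      fin_cases i <;> fin_cases j <;>
        simp [Hself, H12, H13, H23, H10, H20, H21, he, LinearMap.mk₂_apply, Pi.single_apply]
    intro X Y; rw [key]; rfl
  -- membership characterization helpers
  have hdecomp : ∀ x : Fin 3 → K, x = x 0 • e 0 + x 1 • e 1 + x 2 • e 2 := by
    intro x; funext i; fin_cases i <;> simp [he, Pi.single_apply]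
  -- the linear map Φ
  let Φ : derivSpace μ t →ₗ[K] (Fin 3 → K) :=
    { toFun := fun D => ![D.1 (e 0) 0, D.1 (e 0) 2, D.1 (e 1) 2]
      map_add' := by
        intro a b; funext i
        fin_cases i <;> simp [Fin.isValue, Matrix.cons_val_zero, Matrix.cons_val_one]
      map_smul' := by
        intro c a; funext i
        fin_cases i <;> simp [Fin.isValue, Matrix.cons_val_zero, Matrix.cons_val_one] }
  have hinj : Function.Injective Φ := by
    rw [injective_iff_map_eq_zero]
    intro D h0
    have h00 : D.1 (e 0) 0 = 0 := by have := congrFun h0 0; simpa [Φ] using this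
    have h02 : D.1 (e 0) 2 = 0 := by have := congrFun h0 1; simpa [Φ] using this
    have h12' : D.1 (e 1) 2 = 0 := by have := congrFun h0 2; simpa [Φ] using this
    have hD := D.2
    -- extract structural constraints
    have c1 : D.1 (e 0) 1 = 0 := by
      have := hD (e 0) (e 0)
      rw [hμ (e 0) (e 0), hμ (D.1 (e 0)) (e 0)] at this
      have h2 := congrFun this 2
      simp [he, Pi.single_apply] at h2
      rw [he 0]; simpa using h2
    have c2 : D.1 (e 1) 0 = 0 := by
      have := hD (e 1) (e 1)
      rw [hμ (e 1) (e 1), hμ (D.1 (e 1)) (e 1)] at this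
      have h2 := congrFun this 2
      simp [he, Pi.single_apply] at h2
      rw [he 1]; simpa using h2.symm
    have c3 : D.1 (e 2) 0 = 0 := by
      have := hD (e 2) (e 1)
      rw [hμ (e 2) (e 1), hμ (D.1 (e 2)) (e 1)] at this
      have h2 := congrFun this 2
      simp [he, Pi.single_apply] at h2
      rw [he 2]; simpa using h2.symm
    have c4 : D.1 (e 2) 1 = 0 := by
      have := hD (e 2) (e 0)
      rw [hμ (e 2) (e 0), hμ (D.1 (e 2)) (e 0)] at this
      have h2 := congrFun this 2
      simp [he, Pi.single_apply] at h2
      rw [he 2]; simpa using h2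
    have c5 : t * D.1 (e 2) 2 = D.1 (e 0) 0 := by
      have := hD (e 0) (e 1)
      rw [hμ (e 0) (e 1), hμ (D.1 (e 0)) (e 1)] at this
      have h2 := congrFun this 2
      simp [he, Pi.single_apply] at h2
      rw [he 2, he 0]; simpa using h2
    have c6 : t * D.1 (e 2) 2 = D.1 (e 1) 1 := by
      have := hD (e 1) (e 0)
      rw [hμ (e 1) (e 0), hμ (D.1 (e 1)) (e 0)] at this
      have h2 := congrFun this 2
      simp [he, Pi.single_apply] at h2
      rw [he 2, he 1]; simpa using h2
    have hz2 : D.1 (e 2) 2 = 0 := by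
      have := c5.trans h00
      exact (mul_eq_zero.mp this).resolve_left ht0
    have hE0 : D.1 (e 0) = 0 := by
      funext i; fin_cases i
      · exact h00
      · exact c1
      · exact h02
    have hE1 : D.1 (e 1) = 0 := by
      funext i; fin_cases i
      · exact c2
      · show D.1 (e 1) 1 = 0
        rw [← c6, hz2, mul_zero]
      · exact h12'
    have hE2 : D.1 (e 2) = 0 := by
      funext i; fin_cases i
      · exact c3
      · exact c4
      · exact hz2
    have : D.1 = 0 := by
      apply LinearMap.ext
      intro x
      conv_lhs => rw [hdecomp x]
      simp [hE0, hE1, hE2]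
    exact Subtype.ext this
  have hsurj : Function.Surjective Φ := by
    intro v
    set Dv : (Fin 3 → K) →ₗ[K] (Fin 3 → K) :=
      { toFun := fun x => ![v 0 * x 0, v 0 * x 1, v 1 * x 0 + v 2 * x 1 + v 0 / t * x 2]
        map_add' := by
          intro x y; funext i
          fin_cases i <;> simp <;> ring
        map_smul' := by
          intro c x; funext i
          fin_cases i <;> simp <;> ring } with hDv
    have hmem : Dv ∈ derivSpace μ t := by
      intro X Y
      rw [hμ X Y, hμ (Dv X) Y, map_smul]
      have hDvX0 : Dv X 0 = v 0 * X 0 := rfl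
      have hDvX1 : Dv X 1 = v 0 * X 1 := rfl
      have hDve2 : Dv (e 2) = (v 0 / t) • e 2 := by
        funext i; fin_cases i <;> simp [Dv, he, Pi.single_apply]
      rw [hDve2, hDvX0, hDvX1, smul_smul, smul_smul]
      congr 1
      field_simp
    refine ⟨⟨Dv, hmem⟩, ?_⟩
    funext i
    fin_cases i <;> simp [Φ, Dv, he, Pi.single_apply]
  have equiv := LinearEquiv.ofBijective Φ ⟨hinj, hsurj⟩
  rw [equiv.finrank_eq, Module.finrank_fin_fun]
end

section
/- Let g be a Lie algebra over K (char 0), t ∈ K, and D a (t,1,0)-derivation of g. Define λ(X,Y) := ⁅D X, Y⁆. Then λ is an anti-symmetric bilinear map and (g, λ) is a Lie algebra, i.e., λ satisfies the Jacobi identity; moreover ⁅·,·⁆ + s·λ satisfies the Jacobi identity for every s ∈ K. -/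
theorem stmt_17 {K L : Type*} [Field K] [CharZero K] [LieRing L] [LieAlgebra K L]
    (t : K) (D : L →ₗ[K] L) (hD : ∀ X Y : L, t • D ⁅X, Y⁆ = ⁅D X, Y⁆) :
    (∀ X Y : L, ⁅D X, Y⁆ = -⁅D Y, X⁆) ∧
    (∀ X Y Z : L, ⁅D X, ⁅D Y, Z⁆⁆ + ⁅D Y, ⁅D Z, X⁆⁆ + ⁅D Z, ⁅D X, Y⁆⁆ = 0) ∧
    (∀ s : K, ∀ b : L → L → L, (∀ A B : L, b A B = ⁅A, B⁆ + s • ⁅D A, B⁆) →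
      ∀ X Y Z : L, b X (b Y Z) + b Y (b Z X) + b Z (b X Y) = 0) := by
  -- skew-symmetry of λ
  have hskew : ∀ X Y : L, ⁅D X, Y⁆ = -⁅D Y, X⁆ := by
    intro X Y
    rw [← hD, ← hD, ← lie_skew X Y, map_neg, smul_neg]
  -- swap: ⁅D X, Y⁆ = ⁅X, D Y⁆
  have hswap : ∀ X Y : L, ⁅D X, Y⁆ = ⁅X, D Y⁆ := by
    intro X Y
    rw [hskew, ← lie_skew, neg_neg]
  -- U-sum: cyclic sum of ⁅D X, ⁅Y, Z⁆⁆ vanishes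
  have hU : ∀ X Y Z : L, ⁅D X, ⁅Y, Z⁆⁆ + ⁅D Y, ⁅Z, X⁆⁆ + ⁅D Z, ⁅X, Y⁆⁆ = 0 := by
    intro X Y Z
    rw [← hD, ← hD, ← hD, ← smul_add, ← smul_add, ← map_add, ← map_add,
      lie_jacobi X Y Z, map_zero, smul_zero]
  -- T-sum: cyclic sum of ⁅X, ⁅D Y, Z⁆⁆ vanishes
  have hT : ∀ X Y Z : L, ⁅X, ⁅D Y, Z⁆⁆ + ⁅Y, ⁅D Z, X⁆⁆ + ⁅Z, ⁅D X, Y⁆⁆ = 0 := by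
    intro X Y Z
    rw [← hD Y Z, ← hD Z X, ← hD X Y, lie_smul, lie_smul, lie_smul, ← smul_add,
      ← smul_add, ← hswap X, ← hswap Y, ← hswap Z, hU X Y Z, smul_zero]
  -- λ-Jacobi
  have hS : ∀ X Y Z : L, ⁅D X, ⁅D Y, Z⁆⁆ + ⁅D Y, ⁅D Z, X⁆⁆ + ⁅D Z, ⁅D X, Y⁆⁆ = 0 := by
    intro X Y Z
    rw [← hD X ⁅D Y, Z⁆, ← hD Y ⁅D Z, X⁆, ← hD Z ⁅D X, Y⁆, ← smul_add, ← smul_add,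
      ← map_add, ← map_add, hT X Y Z, map_zero, smul_zero]
  refine ⟨hskew, hS, ?_⟩
  intro s b hb X Y Z
  simp only [hb, lie_add, add_lie, lie_smul, smul_add, smul_smul]
  have e1 := lie_jacobi X Y Z
  have e2 := hT X Y Z
  have e3 := hU X Y Z
  have e4 := hS X Y Z
  linear_combination (norm := module) e1 + s • e2 + s • e3 + (s * s) • e4
end

section
/- Let K have characteristic zero and t ∈ K with t ≠ 0, t ≠ 1. Let g = h₃(K) be the Heisenberg Lie algebra (basis e₁,e₂,e₃, ⁅e₁,e₂⁆ = e₃). Then the linear map D defined by D e₁ = t·e₁, D e₂ = t·e₂, D e₃ = e₃ is a (t,1,0)-derivation of g that does not belong to Ω(g); hence dim D(t,1,0)(g) = dim Ω(g) + dim Hom(⁅g,g⁆, Z(g) ∩ ⁅g,g⁆) (the upper bound of the dimension estimate is attained). -/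
theorem stmt_19 {K : Type*} [Field K] [CharZero K] (t : K) (ht0 : t ≠ 0) (ht1 : t ≠ 1)
    (μ : (Fin 3 → K) →ₗ[K] (Fin 3 → K) →ₗ[K] (Fin 3 → K))
    (hanti : ∀ X Y : Fin 3 → K, μ X Y = -μ Y X)
    (e : Fin 3 → Fin 3 → K) (he : ∀ i, e i = Pi.single i 1)
    (h12 : μ (e 0) (e 1) = e 2)
    (h13 : μ (e 0) (e 2) = 0) (h23 : μ (e 1) (e 2) = 0)
    (D : (Fin 3 → K) →ₗ[K] (Fin 3 → K))
    (hD0 : D (e 0) = t • e 0) (hD1 : D (e 1) = t • e 1) (hD2 : D (e 2) = e 2) :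
    D ∈ derivSpace μ t ∧ D ∉ omegaSub μ ∧
      Module.finrank K (derivSpace μ t) =
        Module.finrank K (omegaSub μ) +
          Module.finrank K (↥(derivedSub μ) →ₗ[K] ↥(centerSub μ ⊓ derivedSub μ)) := by

  classical
  have hne2 : e 2 ≠ 0 := by
    intro h
    have h2 := congrFun h 2
    simp [he] at h2
  have happ : ∀ i j : Fin 3, e i j = if j = i then 1 else 0 := by
    intro i j; simp [he, Pi.single_apply]
  have hdecomp : ∀ X : Fin 3 → K, X = X 0 • e 0 + X 1 • e 1 + X 2 • e 2 := by
    intro X; funext j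
    fin_cases j <;> simp [happ]
  have key : ∀ (F : (Fin 3 → K) →ₗ[K] (Fin 3 → K)) (X : Fin 3 → K),
      F X = X 0 • F (e 0) + X 1 • F (e 1) + X 2 • F (e 2) := by
    intro F X
    conv_lhs => rw [hdecomp X]
    simp
  have hXX : ∀ X, μ X X = 0 := by
    intro X
    have h := hanti X X
    have h2 : (2 : K) • μ X X = 0 := by
      rw [two_smul]
      nth_rewrite 2 [h]
      simp
    rcases smul_eq_zero.mp h2 with h | h
    · exact absurd h two_ne_zero
    · exact h
  have h21 : μ (e 1) (e 0) = -e 2 := by rw [hanti, h12]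
  have h31 : μ (e 2) (e 0) = 0 := by rw [hanti, h13]; simp
  have h32 : μ (e 2) (e 1) = 0 := by rw [hanti, h23]; simp
  have hmu : ∀ X Y, μ X Y = (X 0 * Y 1 - X 1 * Y 0) • e 2 := by
    intro X Y
    conv_lhs => rw [hdecomp X, hdecomp Y]
    simp only [map_add, map_smul, LinearMap.add_apply, LinearMap.smul_apply,
      h12, h13, h23, h21, h31, h32, hXX, smul_zero, add_zero, zero_add, smul_neg]
    module

  have hcancel : ∀ a b : K, a • e 2 = b • e 2 → a = b := by
    intro a b h
    have h2 : (a - b) • e 2 = 0 := by rw [sub_smul, h, sub_self]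
    rcases smul_eq_zero.mp h2 with h' | h'
    · exact sub_eq_zero.mp h'
    · exact absurd h' hne2
  have hext : ∀ F G : (Fin 3 → K) →ₗ[K] (Fin 3 → K),
      F (e 0) = G (e 0) → F (e 1) = G (e 1) → F (e 2) = G (e 2) → F = G := by
    intro F G h0 h1 h2
    apply LinearMap.ext; intro X
    rw [key F, key G, h0, h1, h2]
  have hmemD : ∀ D' : (Fin 3 → K) →ₗ[K] (Fin 3 → K),
      D' ∈ derivSpace μ t ↔ ∀ X Y, t • D' (μ X Y) = μ (D' X) Y := fun _ => Iff.rfl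
  have hmemO : ∀ T : (Fin 3 → K) →ₗ[K] (Fin 3 → K),
      T ∈ omegaSub μ ↔ (∀ x y, μ (T x) y = 0) ∧ ∀ x ∈ derivedSub μ, T x = 0 := fun _ => Iff.rfl
  -- D is a derivation
  have hDmem : D ∈ derivSpace μ t := by
    rw [hmemD]; intro X Y
    have hx0 : (D X) 0 = t * X 0 := by
      rw [key D X, hD0, hD1, hD2]; simp [happ]; ring
    have hx1 : (D X) 1 = t * X 1 := by
      rw [key D X, hD0, hD1, hD2]; simp [happ]; ring
    rw [hmu X Y, map_smul, hD2, hmu (D X) Y, hx0, hx1, smul_smul]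
    congr 1; ring
  -- D is not in Omega
  have hDnot : D ∉ omegaSub μ := by
    intro h
    have h1 := h.1 (e 0) (e 1)
    rw [hD0, hmu] at h1
    simp [happ] at h1
    rcases h1 with h' | h'
    · exact ht0 h'
    · exact hne2 h'
  -- derived subalgebra
  have he2mem : e 2 ∈ derivedSub μ := Submodule.subset_span ⟨e 0, e 1, h12⟩
  have hder : derivedSub μ = Submodule.span K {e 2} := by
    apply le_antisymm
    · apply Submodule.span_le.mpr
      rintro z ⟨X, Y, rfl⟩
      rw [hmu]
      exact Submodule.smul_mem _ _ (Submodule.mem_span_singleton_self _)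
    · exact Submodule.span_le.mpr (Set.singleton_subset_iff.mpr he2mem)
  have hcent : e 2 ∈ centerSub μ := by
    intro Y
    rw [hmu]; simp [happ]
  have hinf : centerSub μ ⊓ derivedSub μ = Submodule.span K {e 2} := by
    rw [hder]
    apply le_antisymm inf_le_right
    refine le_inf ?_ le_rfl
    rw [Submodule.span_le, Set.singleton_subset_iff]
    exact hcent
  -- the three basis derivations
  set A : (Fin 3 → K) →ₗ[K] (Fin 3 → K) :=
    (LinearMap.proj 0 : (Fin 3 → K) →ₗ[K] K).smulRight (e 0) +
      (LinearMap.proj 1 : (Fin 3 → K) →ₗ[K] K).smulRight (e 1) +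
      (t⁻¹ • (LinearMap.proj 2 : (Fin 3 → K) →ₗ[K] K)).smulRight (e 2) with hAdef
  set B : (Fin 3 → K) →ₗ[K] (Fin 3 → K) :=
    (LinearMap.proj 0 : (Fin 3 → K) →ₗ[K] K).smulRight (e 2) with hBdef
  set C : (Fin 3 → K) →ₗ[K] (Fin 3 → K) :=
    (LinearMap.proj 1 : (Fin 3 → K) →ₗ[K] K).smulRight (e 2) with hCdef
  have hA : ∀ X, A X = X 0 • e 0 + X 1 • e 1 + (t⁻¹ * X 2) • e 2 := by
    intro X
    simp [hAdef, LinearMap.smulRight_apply, LinearMap.proj_apply, smul_smul]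
  have hB : ∀ X, B X = X 0 • e 2 := by
    intro X; simp [hBdef]
  have hC : ∀ X, C X = X 1 • e 2 := by
    intro X; simp [hCdef]
  have hAe0 : A (e 0) = e 0 := by rw [hA]; simp [happ]
  have hAe1 : A (e 1) = e 1 := by rw [hA]; simp [happ]
  have hAe2 : A (e 2) = t⁻¹ • e 2 := by rw [hA]; simp [happ]
  have hAmem : A ∈ derivSpace μ t := by
    rw [hmemD]; intro X Y
    have h0 : (A X) 0 = X 0 := by rw [hA]; simp [happ]
    have h1 : (A X) 1 = X 1 := by rw [hA]; simp [happ]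
    rw [hmu X Y, map_smul, hAe2, hmu (A X) Y, h0, h1, smul_smul, smul_smul]
    congr 1
    field_simp
  have hBmem : B ∈ derivSpace μ t := by
    rw [hmemD]; intro X Y
    rw [hmu X Y, map_smul, hB, hmu (B X) Y, hB]
    simp [happ]
  have hCmem : C ∈ derivSpace μ t := by
    rw [hmemD]; intro X Y
    rw [hmu X Y, map_smul, hC, hmu (C X) Y, hC]
    simp [happ]
  have hBomega : B ∈ omegaSub μ := by
    rw [hmemO]
    constructor
    · intro x y
      rw [hB, hmu]; simp [happ]
    · intro x hx
      rw [hder, Submodule.mem_span_singleton] at hx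
      obtain ⟨c, rfl⟩ := hx
      rw [map_smul, hB]; simp [happ]
  have hComega : C ∈ omegaSub μ := by
    rw [hmemO]
    constructor
    · intro x y
      rw [hC, hmu]; simp [happ]
    · intro x hx
      rw [hder, Submodule.mem_span_singleton] at hx
      obtain ⟨c, rfl⟩ := hx
      rw [map_smul, hC]; simp [happ]
  -- span characterization of derivSpace
  have hspanD : derivSpace μ t = Submodule.span K (Set.range ![A, B, C]) := by
    apply le_antisymm
    · intro D' hD'
      have hcond := (hmemD D').mp hD'
      have f01 : (D' (e 0)) 1 = 0 := by
        have h := hcond (e 0) (e 0)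
        rw [hXX, map_zero, smul_zero, hmu (D' (e 0)) (e 0)] at h
        simp [happ] at h
        rcases h with h' | h'
        · exact h'
        · exact absurd h' hne2
      have f10 : (D' (e 1)) 0 = 0 := by
        have h := hcond (e 1) (e 1)
        rw [hXX, map_zero, smul_zero, hmu (D' (e 1)) (e 1)] at h
        have h2 : (D' (e 1)) 0 * e 1 1 - (D' (e 1)) 1 * e 1 0 = 0 :=
          hcancel _ 0 (by rw [zero_smul]; exact h.symm)
        rw [happ, happ] at h2
        simp at h2
        linear_combination h2
      have fe2 : D' (e 2) = (t⁻¹ * (D' (e 0)) 0) • e 2 := by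
        have h := hcond (e 0) (e 1)
        rw [h12, hmu (D' (e 0)) (e 1)] at h
        simp [happ] at h
        calc D' (e 2) = t⁻¹ • (t • D' (e 2)) := by
              rw [smul_smul, inv_mul_cancel₀ ht0, one_smul]
          _ = (t⁻¹ * (D' (e 0)) 0) • e 2 := by rw [h, smul_smul]
      have f11 : (D' (e 1)) 1 = (D' (e 0)) 0 := by
        have h := hcond (e 1) (e 0)
        rw [h21, map_neg, fe2, hmu (D' (e 1)) (e 0)] at h
        rw [smul_neg, smul_smul, ← neg_smul] at h
        have h2 := hcancel _ _ h
        rw [happ, happ] at h2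
        simp at h2
        field_simp at h2
        linear_combination -h2
      have hDeq : D' = ((D' (e 0)) 0) • A + ((D' (e 0)) 2) • B + ((D' (e 1)) 2) • C := by
        apply hext
        · simp only [LinearMap.add_apply, LinearMap.smul_apply, hAe0]
          rw [hB, hC]
          conv_lhs => rw [hdecomp (D' (e 0))]
          rw [f01]
          simp [happ]
        · simp only [LinearMap.add_apply, LinearMap.smul_apply, hAe1]
          rw [hB, hC]
          conv_lhs => rw [hdecomp (D' (e 1))]
          rw [f10, f11]
          simp [happ]
        · simp only [LinearMap.add_apply, LinearMap.smul_apply, hAe2]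
          rw [hB, hC, fe2]
          simp [happ, smul_smul, mul_comm]
      rw [hDeq]
      refine Submodule.add_mem _ (Submodule.add_mem _ ?_ ?_) ?_ <;>
        refine Submodule.smul_mem _ _ (Submodule.subset_span ?_)
      · exact ⟨0, rfl⟩
      · exact ⟨1, rfl⟩
      · exact ⟨2, rfl⟩
    · rw [Submodule.span_le]
      rintro x ⟨i, rfl⟩
      fin_cases i
      · exact hAmem
      · exact hBmem
      · exact hCmem
  -- span characterization of omegaSub
  have hspanO : omegaSub μ = Submodule.span K (Set.range ![B, C]) := by
    apply le_antisymm
    · intro T hT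
      have h1 := ((hmemO T).mp hT).1
      have h2 := ((hmemO T).mp hT).2
      have g0 : ∀ x, (T x) 0 = 0 := by
        intro x
        have h := h1 x (e 1)
        rw [hmu] at h
        simp [happ] at h
        rcases h with h' | h'
        · exact h'
        · exact absurd h' hne2
      have g1 : ∀ x, (T x) 1 = 0 := by
        intro x
        have h := h1 x (e 0)
        rw [hmu] at h
        simp [happ] at h
        rcases h with h' | h'
        · exact h'
        · exact absurd h' hne2
      have hTeq : T = ((T (e 0)) 2) • B + ((T (e 1)) 2) • C := by
        apply hext
        · simp only [LinearMap.add_apply, LinearMap.smul_apply]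
          rw [hB, hC]
          conv_lhs => rw [hdecomp (T (e 0))]
          rw [g0, g1]
          simp [happ]
        · simp only [LinearMap.add_apply, LinearMap.smul_apply]
          rw [hB, hC]
          conv_lhs => rw [hdecomp (T (e 1))]
          rw [g0, g1]
          simp [happ]
        · simp only [LinearMap.add_apply, LinearMap.smul_apply]
          rw [hB, hC, h2 (e 2) he2mem]
          simp [happ]
      rw [hTeq]
      refine Submodule.add_mem _ ?_ ?_ <;>
        refine Submodule.smul_mem _ _ (Submodule.subset_span ?_)
      · exact ⟨0, rfl⟩
      · exact ⟨1, rfl⟩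
    · rw [Submodule.span_le]
      rintro x ⟨i, rfl⟩
      fin_cases i
      · exact hBomega
      · exact hComega
  -- linear independence
  have hliD : LinearIndependent K ![A, B, C] := by
    rw [Fintype.linearIndependent_iff]
    intro g hg
    have h0 : g 0 • A (e 0) + g 1 • B (e 0) + g 2 • C (e 0) = 0 := by
      have := DFunLike.congr_fun hg (e 0)
      simpa [Fin.sum_univ_three] using this
    have h1 : g 0 • A (e 1) + g 1 • B (e 1) + g 2 • C (e 1) = 0 := by
      have := DFunLike.congr_fun hg (e 1)
      simpa [Fin.sum_univ_three] using this
    rw [hAe0, hB, hC] at h0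
    rw [hAe1, hB, hC] at h1
    have c00 := congrFun h0 0
    have c02 := congrFun h0 2
    have c12 := congrFun h1 2
    simp [happ] at c00 c02 c12
    intro i
    fin_cases i
    · exact c00
    · exact c02
    · exact c12
  have hliO : LinearIndependent K ![B, C] := by
    rw [Fintype.linearIndependent_iff]
    intro g hg
    have h0 : g 0 • B (e 0) + g 1 • C (e 0) = 0 := by
      have := DFunLike.congr_fun hg (e 0)
      simpa [Fin.sum_univ_two] using this
    have h1 : g 0 • B (e 1) + g 1 • C (e 1) = 0 := by
      have := DFunLike.congr_fun hg (e 1)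
      simpa [Fin.sum_univ_two] using this
    rw [hB, hC] at h0
    rw [hB, hC] at h1
    have c02 := congrFun h0 2
    have c12 := congrFun h1 2
    simp [happ] at c02 c12
    intro i
    fin_cases i
    · exact c02
    · exact c12
  refine ⟨hDmem, hDnot, ?_⟩
  rw [hspanD, hspanO, finrank_span_eq_card hliD, finrank_span_eq_card hliO, hinf, hder]
  have hr1 : Module.finrank K ↥(Submodule.span K {e 2}) = 1 := finrank_span_singleton hne2
  rw [Module.finrank_linearMap, hr1]
  simp
end
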